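/- (Main theorem / Theorem 2 of the paper.) Let Â ∈ ℝ^{m×n}, X_opt an h-dimensional subspace with D̂ = P_opt(Â), and let Δ̂_max and Δ̂_min be the largest and h-th largest singular values of D̂. Let X_LSI be the span of the first h left singular vectors of Â, and let ε̂₀ = ‖(Â − D̂)ᵀ(Â − D̂)‖₂. If Δ̂_min > sqrt(ε̂₀), then ‖tan Θ(X_LSI, X_opt)‖₂ ≤ (Δ̂_max/Δ̂_min) · (sqrt(ε̂₀)/Δ̂_min) / (1 − (sqrt(ε̂₀)/Δ̂_min)²). -/

import Mathlib

open scoped BigOperators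
open Matrix

noncomputable def frobNorm {r s : ℕ} (M : Matrix (Fin r) (Fin s) ℝ) : ℝ :=
  Real.sqrt (∑ i, ∑ j, M i j ^ 2)

noncomputable def specNorm {r s : ℕ} (M : Matrix (Fin r) (Fin s) ℝ) : ℝ :=
  sSup {c : ℝ | ∃ x : Fin s → ℝ, (∑ j, x j ^ 2) = 1 ∧
    c = Real.sqrt (∑ i, (M.mulVec x i) ^ 2)}

/-- `σ` enumerates the singular values of `M` in nonincreasing order,
    padded with zeros beyond index `s`. -/
def IsSingularValues {r s : ℕ} (M : Matrix (Fin r) (Fin s) ℝ) (σ : ℕ → ℝ) : Prop :=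
  Antitone σ ∧ (∀ i, 0 ≤ σ i) ∧ (∀ i, s ≤ i → σ i = 0) ∧
  ∀ hH : (Mᵀ * M).IsHermitian,
    Multiset.map (fun i : Fin s => σ (i : ℕ) ^ 2) Finset.univ.val
      = Multiset.map hH.eigenvalues Finset.univ.val

section LSIAux

lemma dotsq_nonneg {k : ℕ} (x : Fin k → ℝ) : 0 ≤ x ⬝ᵥ x :=
  Finset.sum_nonneg fun i _ => mul_self_nonneg _

lemma dot_le_sqrt {k : ℕ} (a b : Fin k → ℝ) :
    a ⬝ᵥ b ≤ Real.sqrt (a ⬝ᵥ a) * Real.sqrt (b ⬝ᵥ b) := by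
  have h := Finset.sum_mul_sq_le_sq_mul_sq Finset.univ a b
  have h1 : a ⬝ᵥ b ≤ |a ⬝ᵥ b| := le_abs_self _
  have h2 : |a ⬝ᵥ b| = Real.sqrt ((a ⬝ᵥ b)^2) := (Real.sqrt_sq_eq_abs _).symm
  have h3 : Real.sqrt ((a ⬝ᵥ b)^2) ≤ Real.sqrt ((∑ i, a i ^2) * (∑ i, b i ^2)) := by
    apply Real.sqrt_le_sqrt
    simpa [dotProduct, pow_two] using h
  have h4 : Real.sqrt ((∑ i, a i ^2) * (∑ i, b i ^2))
      = Real.sqrt (a ⬝ᵥ a) * Real.sqrt (b ⬝ᵥ b) := by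
    rw [Real.sqrt_mul (by positivity)]
    congr 1 <;> simp [dotProduct, pow_two]
  linarith

lemma mulVec_ortho {m h : ℕ} (Xt : Matrix (Fin m) (Fin h) ℝ) (hXt : Xtᵀ * Xt = 1)
    (a b : Fin h → ℝ) : (Xt *ᵥ a) ⬝ᵥ (Xt *ᵥ b) = a ⬝ᵥ b := by
  rw [dotProduct_mulVec, ← mulVec_transpose, mulVec_mulVec, hXt, one_mulVec]

lemma contraction {m h : ℕ} (Xt : Matrix (Fin m) (Fin h) ℝ) (hXt : Xtᵀ * Xt = 1)
    (y : Fin m → ℝ) : (Xtᵀ *ᵥ y) ⬝ᵥ (Xtᵀ *ᵥ y) ≤ y ⬝ᵥ y := by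
  set z := Xtᵀ *ᵥ y with hz
  have key : (y - Xt *ᵥ z) ⬝ᵥ (y - Xt *ᵥ z) = y ⬝ᵥ y - z ⬝ᵥ z := by
    have h1 : y ⬝ᵥ (Xt *ᵥ z) = z ⬝ᵥ z := by
      rw [dotProduct_mulVec, ← mulVec_transpose]
    have h2 : (Xt *ᵥ z) ⬝ᵥ (Xt *ᵥ z) = z ⬝ᵥ z := mulVec_ortho Xt hXt z z
    have h3 : (Xt *ᵥ z) ⬝ᵥ y = z ⬝ᵥ z := by
      rw [dotProduct_comm, h1]
    simp [sub_dotProduct, dotProduct_sub, h1, h2, h3]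
  have := dotsq_nonneg (y - Xt *ᵥ z)
  linarith [key ▸ this]
lemma specNorm_set_bdd {r s : ℕ} (M : Matrix (Fin r) (Fin s) ℝ) :
    BddAbove {c : ℝ | ∃ x : Fin s → ℝ, (∑ j, x j ^ 2) = 1 ∧
      c = Real.sqrt (∑ i, (M.mulVec x i) ^ 2)} := by
  refine ⟨Real.sqrt (∑ i, ∑ j, M i j ^ 2), ?_⟩
  rintro c ⟨x, hx, rfl⟩
  apply Real.sqrt_le_sqrt
  apply Finset.sum_le_sum
  intro i _
  have h := Finset.sum_mul_sq_le_sq_mul_sq Finset.univ (fun j => M i j) x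
  calc (M.mulVec x i)^2 = (∑ j, M i j * x j)^2 := by rfl
    _ ≤ (∑ j, M i j ^2) * (∑ j, x j ^2) := h
    _ = ∑ j, M i j ^ 2 := by rw [hx, mul_one]

lemma specNorm_nonneg {r s : ℕ} (M : Matrix (Fin r) (Fin s) ℝ) : 0 ≤ specNorm M := by
  rcases Set.eq_empty_or_nonempty {c : ℝ | ∃ x : Fin s → ℝ, (∑ j, x j ^ 2) = 1 ∧
      c = Real.sqrt (∑ i, (M.mulVec x i) ^ 2)} with he | ⟨c, hc⟩
  · rw [specNorm, he, Real.sSup_empty]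
  · refine le_trans ?_ (le_csSup (specNorm_set_bdd M) hc)
    obtain ⟨x, hx, rfl⟩ := hc
    exact Real.sqrt_nonneg _

lemma specNorm_quad {m n : ℕ} (Db : Matrix (Fin m) (Fin n) ℝ) (x : Fin n → ℝ) :
    (Db *ᵥ x) ⬝ᵥ (Db *ᵥ x) ≤ specNorm (Dbᵀ * Db) * (x ⬝ᵥ x) := by
  set B := Dbᵀ * Db with hB
  have quad : ∀ y : Fin n → ℝ, (Db *ᵥ y) ⬝ᵥ (Db *ᵥ y) = y ⬝ᵥ (B *ᵥ y) := by
    intro y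
    rw [hB, ← Matrix.mulVec_mulVec, Matrix.dotProduct_mulVec y, Matrix.vecMul_transpose]
  by_cases hx : x ⬝ᵥ x = 0
  · have hx0 : x = 0 := by
      funext j
      have h1 : ∀ i ∈ Finset.univ, (0:ℝ) ≤ x i * x i := fun i _ => mul_self_nonneg _
      have := (Finset.sum_eq_zero_iff_of_nonneg h1).1 hx j (Finset.mem_univ j)
      exact mul_self_eq_zero.1 this
    simp [hx0]
  · have hxpos : 0 < x ⬝ᵥ x := lt_of_le_of_ne (dotsq_nonneg x) (Ne.symm hx)
    set t := Real.sqrt (x ⬝ᵥ x) with ht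
    have htpos : 0 < t := Real.sqrt_pos.2 hxpos
    set x' : Fin n → ℝ := t⁻¹ • x with hx'
    have hx'unit : (∑ j, x' j ^ 2) = 1 := by
      have : ∑ j, x' j ^2 = t⁻¹^2 * (x ⬝ᵥ x) := by
        simp [hx', dotProduct, Finset.mul_sum, pow_two, mul_assoc]
        exact Finset.sum_congr rfl fun j _ => by ring
      rw [this, inv_pow, ht, Real.sq_sqrt hxpos.le]
      exact inv_mul_cancel₀ hx
    have hmem : Real.sqrt (∑ i, (B.mulVec x' i) ^ 2) ∈ {c : ℝ | ∃ y : Fin n → ℝ,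
        (∑ j, y j ^ 2) = 1 ∧ c = Real.sqrt (∑ i, (B.mulVec y i) ^ 2)} := ⟨x', hx'unit, rfl⟩
    have hle : x' ⬝ᵥ (B *ᵥ x') ≤ specNorm B := by
      calc x' ⬝ᵥ (B *ᵥ x') ≤ Real.sqrt (x' ⬝ᵥ x') * Real.sqrt ((B *ᵥ x') ⬝ᵥ (B *ᵥ x')) :=
            dot_le_sqrt _ _
        _ = Real.sqrt (∑ i, (B.mulVec x' i) ^ 2) := by
            rw [show x' ⬝ᵥ x' = 1 from by simpa [dotProduct, pow_two] using hx'unit]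
            simp [dotProduct, pow_two]
        _ ≤ specNorm B := le_csSup (specNorm_set_bdd B) hmem
    have hscale : x ⬝ᵥ (B *ᵥ x) = (x ⬝ᵥ x) * (x' ⬝ᵥ (B *ᵥ x')) := by
      have hxx : x = t • x' := by
        rw [hx', smul_smul, mul_inv_cancel₀ htpos.ne', one_smul]
      have ht2 : t * t = x ⬝ᵥ x := Real.mul_self_sqrt hxpos.le
      conv_lhs => rw [hxx, Matrix.mulVec_smul, smul_dotProduct, dotProduct_smul, smul_eq_mul,
        smul_eq_mul, ← mul_assoc, ht2]
    rw [quad, hscale]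
    have := mul_le_mul_of_nonneg_left hle hxpos.le
    linarith [this]


lemma eigbasis_dot {k : ℕ} {B : Matrix (Fin k) (Fin k) ℝ} (hB : B.IsHermitian) (i j : Fin k) :
    (WithLp.equiv 2 _ (hB.eigenvectorBasis i)) ⬝ᵥ (WithLp.equiv 2 _ (hB.eigenvectorBasis j))
      = if i = j then 1 else 0 := by
  have h := hB.eigenvectorBasis.orthonormal
  have h2 := orthonormal_iff_ite.mp h i j
  rw [← h2]
  simp [PiLp.inner_apply, dotProduct, RCLike.inner_apply, mul_comm]

lemma eig_lower {k : ℕ} {B : Matrix (Fin k) (Fin k) ℝ} (hB : B.IsHermitian) (κ : ℝ)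
    (hq : ∀ v : Fin k → ℝ, κ * (v ⬝ᵥ v) ≤ v ⬝ᵥ (B *ᵥ v)) (i : Fin k) :
    κ ≤ hB.eigenvalues i := by
  set z : Fin k → ℝ := WithLp.equiv 2 _ (hB.eigenvectorBasis i) with hzdef
  have hz1 : z ⬝ᵥ z = 1 := by
    have := eigbasis_dot hB i i
    simpa [hzdef] using this
  have heig : B *ᵥ z = hB.eigenvalues i • z := hB.mulVec_eigenvectorBasis i
  have := hq z
  rw [heig, dotProduct_smul, smul_eq_mul, hz1] at this
  simpa using this

lemma dotpos {k : ℕ} (v : Fin k → ℝ) (hv : v ≠ 0) : 0 < v ⬝ᵥ v := by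
  rcases lt_or_eq_of_le (Finset.sum_nonneg fun i (_ : i ∈ Finset.univ) =>
    mul_self_nonneg (v i)) with hlt | heq
  · exact hlt
  · exfalso; apply hv; funext j
    exact mul_self_eq_zero.1 ((Finset.sum_eq_zero_iff_of_nonneg
      (fun i _ => mul_self_nonneg (v i))).1 heq.symm j (Finset.mem_univ j))

lemma eig_flip {k : ℕ} (M : Matrix (Fin k) (Fin k) ℝ) (κ : ℝ) (hκ : 0 < κ)
    (h : ∀ v : Fin k → ℝ, κ * (v ⬝ᵥ v) ≤ (Mᵀ *ᵥ v) ⬝ᵥ (Mᵀ *ᵥ v))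
    (hH : (Mᵀ * M).IsHermitian) (i : Fin k) : κ ≤ hH.eigenvalues i := by
  have hker : ∀ v : Fin k → ℝ, Mᵀ *ᵥ v = 0 → v = 0 := by
    intro v hv
    by_contra hv0
    have h1 := h v
    rw [hv] at h1
    simp only [zero_dotProduct, dotProduct_zero] at h1
    nlinarith [dotpos v hv0]
  have hMTinj : Function.Injective (Mᵀ).mulVec := by
    intro v w e
    have h0 : Mᵀ *ᵥ (v - w) = 0 := by rw [Matrix.mulVec_sub, e, sub_self]
    have := hker _ h0
    exact sub_eq_zero.1 this
  have hMinj : Function.Injective M.mulVec := by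
    rw [Matrix.mulVec_injective_iff_isUnit, Matrix.isUnit_iff_isUnit_det]
    rw [Matrix.mulVec_injective_iff_isUnit, Matrix.isUnit_iff_isUnit_det,
      Matrix.det_transpose] at hMTinj
    exact hMTinj
  set z : Fin k → ℝ := WithLp.equiv 2 _ (hH.eigenvectorBasis i) with hzdef
  have hz1 : z ⬝ᵥ z = 1 := by simpa [hzdef] using eigbasis_dot hH i i
  have heig : (Mᵀ * M) *ᵥ z = hH.eigenvalues i • z := hH.mulVec_eigenvectorBasis i
  set p : Fin k → ℝ := M *ᵥ z with hpdef
  have hpne : p ≠ 0 := by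
    intro hp
    have : z = 0 := hMinj (by rw [← hpdef, hp, Matrix.mulVec_zero])
    rw [this] at hz1; simp at hz1
  have key : (Mᵀ *ᵥ p) ⬝ᵥ (Mᵀ *ᵥ p) = hH.eigenvalues i * (p ⬝ᵥ p) := by
    have e1 : (Mᵀ *ᵥ p) ⬝ᵥ (Mᵀ *ᵥ p) = p ⬝ᵥ (M *ᵥ (Mᵀ *ᵥ p)) := by
      rw [Matrix.dotProduct_mulVec p M, Matrix.mulVec_transpose]
    have e2 : M *ᵥ (Mᵀ *ᵥ p) = hH.eigenvalues i • p := by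
      rw [hpdef, Matrix.mulVec_mulVec, Matrix.mulVec_mulVec, Matrix.mul_assoc,
        ← Matrix.mulVec_mulVec, heig, Matrix.mulVec_smul]
    rw [e1, e2, dotProduct_smul, smul_eq_mul]
  have hple := h p
  rw [key] at hple
  have hppos : 0 < p ⬝ᵥ p := dotpos p hpne
  exact le_of_mul_le_mul_right (by linarith) hppos
open Matrix Finset

lemma sum_smul_dot_left {k : ℕ} {ι : Type*} (s : Finset ι) (f : ι → (Fin k → ℝ))
    (c : ι → ℝ) (y : Fin k → ℝ) :
    (∑ i ∈ s, c i • f i) ⬝ᵥ y = ∑ i ∈ s, c i * (f i ⬝ᵥ y) := by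
  simp only [dotProduct, Finset.sum_apply, Pi.smul_apply, smul_eq_mul, Finset.sum_mul,
    Finset.mul_sum]
  rw [Finset.sum_comm]
  simp [mul_assoc]

lemma sum_smul_dot {k : ℕ} {ι : Type*} [DecidableEq ι] (s : Finset ι) (f : ι → (Fin k → ℝ))
    (hON : ∀ i ∈ s, ∀ j ∈ s, f i ⬝ᵥ f j = if i = j then 1 else 0)
    (c d : ι → ℝ) :
    (∑ i ∈ s, c i • f i) ⬝ᵥ (∑ j ∈ s, d j • f j) = ∑ i ∈ s, c i * d i := by
  rw [sum_smul_dot_left]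
  apply Finset.sum_congr rfl
  intro i hi
  have : f i ⬝ᵥ (∑ j ∈ s, d j • f j) = ∑ j ∈ s, d j * (f i ⬝ᵥ f j) := by
    rw [dotProduct_comm, sum_smul_dot_left]
    exact Finset.sum_congr rfl fun j hj => by rw [dotProduct_comm]
  rw [this, Finset.sum_congr rfl (fun j hj => by rw [hON i hi j hj])]
  rw [show (∑ j ∈ s, d j * if i = j then 1 else 0) = ∑ j ∈ s, if j = i then d j else 0 from
    Finset.sum_congr rfl fun j hj => by by_cases hij : i = j <;> simp [hij, eq_comm]]
  rw [Finset.sum_ite_eq' s i d, if_pos hi]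

lemma mulVec_sum_smul {k l : ℕ} {ι : Type*} (s : Finset ι) (B : Matrix (Fin l) (Fin k) ℝ)
    (f : ι → (Fin k → ℝ)) (c : ι → ℝ) :
    B *ᵥ (∑ i ∈ s, c i • f i) = ∑ i ∈ s, c i • (B *ᵥ f i) := by
  have : ∀ x : Fin k → ℝ, B *ᵥ x = B.mulVecLin x := fun x => rfl
  rw [this, map_sum]
  simp [Matrix.mulVecLin]

lemma eig_count_le {k : ℕ} (B1 B2 : Matrix (Fin k) (Fin k) ℝ)
    (h1 : B1.IsHermitian) (h2 : B2.IsHermitian) (t : ℝ)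
    (hcmp : ∀ v : Fin k → ℝ, v ⬝ᵥ (B2 *ᵥ v) ≤ v ⬝ᵥ (B1 *ᵥ v)) :
    (Finset.univ.filter (fun j => t ≤ h2.eigenvalues j)).card
      ≤ (Finset.univ.filter (fun i => t ≤ h1.eigenvalues i)).card := by
  classical
  by_contra hcon
  push_neg at hcon
  set Sc : Finset (Fin k) := Finset.univ.filter (fun i => t ≤ h1.eigenvalues i) with hScdef
  set T : Finset (Fin k) := Finset.univ.filter (fun j => t ≤ h2.eigenvalues j) with hTdef
  set S : Finset (Fin k) := Finset.univ.filter (fun i => ¬ t ≤ h1.eigenvalues i) with hSdef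
  have hsum : Sc.card + S.card = k := by
    rw [hScdef, hSdef, Finset.card_filter_add_card_filter_not]
    simp
  have hbig : k < S.card + T.card := by omega
  set w : Fin k → (Fin k → ℝ) := fun i => WithLp.equiv 2 _ (h1.eigenvectorBasis i) with hwdef
  set u : Fin k → (Fin k → ℝ) := fun j => WithLp.equiv 2 _ (h2.eigenvectorBasis j) with hudef
  set fam : ↑S ⊕ ↑T → (Fin k → ℝ) :=
    Sum.elim (fun i : ↑S => w i.1) (fun j : ↑T => u j.1) with hfamdef
  have hdep : ¬ LinearIndependent ℝ fam := by
    intro hli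
    have hcard := hli.fintype_card_le_finrank
    rw [Module.finrank_pi] at hcard
    simp [Fintype.card_sum] at hcard
    omega
  obtain ⟨g, hg0, z0, hz0⟩ := Fintype.not_linearIndependent_iff.mp hdep
  set c : ↑S → ℝ := fun i => g (Sum.inl i) with hcdef
  set d : ↑T → ℝ := fun j => g (Sum.inr j) with hddef
  have hsplit : (∑ i : ↑S, c i • w i.1) + (∑ j : ↑T, d j • u j.1) = 0 := by
    rw [← hg0, Fintype.sum_sum_type]
    rfl
  set vv : Fin k → ℝ := ∑ i : ↑S, c i • w i.1 with hvvdef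
  have hvv2 : vv = ∑ j : ↑T, (-(d j)) • u j.1 := by
    have : vv = - ∑ j : ↑T, d j • u j.1 := by
      rw [eq_neg_iff_add_eq_zero]; exact hsplit
    rw [this, ← Finset.sum_neg_distrib]
    exact Finset.sum_congr rfl fun j _ => by rw [neg_smul]
  -- orthonormality of subfamilies
  have hONw : ∀ i ∈ (Finset.univ : Finset ↑S), ∀ j ∈ (Finset.univ : Finset ↑S),
      w i.1 ⬝ᵥ w j.1 = if i = j then 1 else 0 := by
    intro i _ j _
    rw [hwdef]
    rw [eigbasis_dot h1 i.1 j.1]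
    by_cases hij : i = j
    · simp [hij]
    · have : i.1 ≠ j.1 := fun e => hij (Subtype.ext e)
      simp [hij, this]
  have hONu : ∀ i ∈ (Finset.univ : Finset ↑T), ∀ j ∈ (Finset.univ : Finset ↑T),
      u i.1 ⬝ᵥ u j.1 = if i = j then 1 else 0 := by
    intro i _ j _
    rw [hudef]
    rw [eigbasis_dot h2 i.1 j.1]
    by_cases hij : i = j
    · simp [hij]
    · have : i.1 ≠ j.1 := fun e => hij (Subtype.ext e)
      simp [hij, this]
  -- c is not identically zero
  have hcne : ∃ i : ↑S, c i ≠ 0 := by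
    by_contra hall
    push_neg at hall
    have hvv0 : vv = 0 := by
      rw [hvvdef]
      exact Finset.sum_eq_zero fun i _ => by rw [hall i, zero_smul]
    have hd0 : ∀ j : ↑T, d j = 0 := by
      intro j
      have hdot := congrArg (fun x => u j.1 ⬝ᵥ x) (hvv2 ▸ hvv0 : (∑ j' : ↑T, (-(d j')) • u j'.1) = 0)
      simp only [dotProduct_zero] at hdot
      rw [dotProduct_comm, sum_smul_dot_left] at hdot
      have : ∑ j' : ↑T, (-(d j')) * (u j'.1 ⬝ᵥ u j.1)
          = ∑ j' : ↑T, if j' = j then -(d j') else 0 := by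
        refine Finset.sum_congr rfl fun j' _ => ?_
        rw [hONu j' (Finset.mem_univ _) j (Finset.mem_univ _)]
        by_cases e : j' = j <;> simp [e]
      rw [this, Finset.sum_ite_eq' Finset.univ j (fun j' => -(d j')), if_pos (Finset.mem_univ _)]
        at hdot
      linarith [hdot]
    rcases z0 with i | j
    · exact hz0 (hall i)
    · exact hz0 (hd0 j)
  obtain ⟨i₀, hi₀⟩ := hcne
  have hc2pos : 0 < ∑ i : ↑S, c i * c i := by
    have : 0 < c i₀ * c i₀ := mul_self_pos.2 hi₀
    have hle : ∀ i ∈ (Finset.univ : Finset ↑S), 0 ≤ c i * c i := fun i _ => mul_self_nonneg _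
    exact Finset.sum_pos' hle ⟨i₀, Finset.mem_univ _, this⟩
  -- norms
  have hnorm1 : vv ⬝ᵥ vv = ∑ i : ↑S, c i * c i := by
    rw [hvvdef]; exact sum_smul_dot Finset.univ _ hONw c c
  have hnorm2 : vv ⬝ᵥ vv = ∑ j : ↑T, d j * d j := by
    rw [hvv2]
    have := sum_smul_dot Finset.univ _ hONu (fun j => -(d j)) (fun j => -(d j))
    rw [this]
    exact Finset.sum_congr rfl fun j _ => by ring
  -- quadratic forms
  have hquad1 : vv ⬝ᵥ (B1 *ᵥ vv) = ∑ i : ↑S, h1.eigenvalues i.1 * (c i * c i) := by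
    rw [hvvdef, mulVec_sum_smul]
    have hrw : (∑ i : ↑S, c i • (B1 *ᵥ w i.1)) = ∑ i : ↑S, (c i * h1.eigenvalues i.1) • w i.1 := by
      refine Finset.sum_congr rfl fun i _ => ?_
      rw [hwdef]
      show c i • (B1 *ᵥ (h1.eigenvectorBasis i.1).ofLp) = (c i * h1.eigenvalues i.1) • (h1.eigenvectorBasis i.1).ofLp
      rw [h1.mulVec_eigenvectorBasis i.1, smul_smul]
    rw [hrw, sum_smul_dot Finset.univ _ hONw c (fun i => c i * h1.eigenvalues i.1)]
    exact Finset.sum_congr rfl fun i _ => by ring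
  have hquad2 : vv ⬝ᵥ (B2 *ᵥ vv) = ∑ j : ↑T, h2.eigenvalues j.1 * (d j * d j) := by
    rw [hvv2, mulVec_sum_smul]
    have hrw : (∑ j : ↑T, (-(d j)) • (B2 *ᵥ u j.1))
        = ∑ j : ↑T, ((-(d j)) * h2.eigenvalues j.1) • u j.1 := by
      refine Finset.sum_congr rfl fun j _ => ?_
      rw [hudef]
      show (-(d j)) • (B2 *ᵥ (h2.eigenvectorBasis j.1).ofLp) = ((-(d j)) * h2.eigenvalues j.1) • (h2.eigenvectorBasis j.1).ofLp
      rw [h2.mulVec_eigenvectorBasis j.1, smul_smul]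
    rw [hrw, sum_smul_dot Finset.univ _ hONu (fun j => -(d j))
      (fun j => (-(d j)) * h2.eigenvalues j.1)]
    exact Finset.sum_congr rfl fun j _ => by ring
  -- the contradiction
  have hup : vv ⬝ᵥ (B1 *ᵥ vv) < t * ∑ i : ↑S, c i * c i := by
    rw [hquad1, Finset.mul_sum]
    apply Finset.sum_lt_sum
    · intro i _
      have hi : h1.eigenvalues i.1 < t := lt_of_not_ge (Finset.mem_filter.1 i.2).2
      exact mul_le_mul_of_nonneg_right hi.le (mul_self_nonneg _)
    · refine ⟨i₀, Finset.mem_univ _, ?_⟩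
      have hi : h1.eigenvalues i₀.1 < t := lt_of_not_ge (Finset.mem_filter.1 i₀.2).2
      exact mul_lt_mul_of_pos_right hi (mul_self_pos.2 hi₀)
  have hdown : t * ∑ j : ↑T, d j * d j ≤ vv ⬝ᵥ (B2 *ᵥ vv) := by
    rw [hquad2, Finset.mul_sum]
    apply Finset.sum_le_sum
    intro j _
    have hj : t ≤ h2.eigenvalues j.1 := (Finset.mem_filter.1 j.2).2
    exact mul_le_mul_of_nonneg_right hj (mul_self_nonneg _)
  have hfin := hcmp vv
  rw [hnorm2] at hnorm1
  have heq : t * ∑ j : ↑T, d j * d j = t * ∑ i : ↑S, c i * c i := by rw [hnorm1]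
  linarith

lemma dot_transpose_left {a b : ℕ} (M : Matrix (Fin a) (Fin b) ℝ) (p : Fin a → ℝ)
    (q : Fin b → ℝ) : (Mᵀ *ᵥ p) ⬝ᵥ q = p ⬝ᵥ (M *ᵥ q) := by
  rw [Matrix.dotProduct_mulVec p M, ← Matrix.mulVec_transpose]

lemma quad_eq {a b : ℕ} (B : Matrix (Fin a) (Fin b) ℝ) (y : Fin b → ℝ) :
    (B *ᵥ y) ⬝ᵥ (B *ᵥ y) = y ⬝ᵥ ((Bᵀ * B) *ᵥ y) := by
  rw [← Matrix.mulVec_mulVec, Matrix.dotProduct_mulVec y, Matrix.vecMul_transpose]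

lemma proj_defect {m h : ℕ} (Xt : Matrix (Fin m) (Fin h) ℝ) (hXt : Xtᵀ * Xt = 1)
    (y : Fin m → ℝ) :
    (y - Xt *ᵥ (Xtᵀ *ᵥ y)) ⬝ᵥ (y - Xt *ᵥ (Xtᵀ *ᵥ y))
      = y ⬝ᵥ y - (Xtᵀ *ᵥ y) ⬝ᵥ (Xtᵀ *ᵥ y) := by
  set z := Xtᵀ *ᵥ y with hz
  have h1 : y ⬝ᵥ (Xt *ᵥ z) = z ⬝ᵥ z := by
    rw [dotProduct_mulVec, ← mulVec_transpose]
  have h2 : (Xt *ᵥ z) ⬝ᵥ (Xt *ᵥ z) = z ⬝ᵥ z := mulVec_ortho Xt hXt z z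
  have h3 : (Xt *ᵥ z) ⬝ᵥ y = z ⬝ᵥ z := by rw [dotProduct_comm, h1]
  simp [sub_dotProduct, dotProduct_sub, h1, h2, h3]

end LSIAux


set_option maxHeartbeats 1600000 in
lemma final_arith (Δmax Δmin εh₀ σA t e κ : ℝ)
    (he0 : 0 ≤ e) (he2 : e^2 = εh₀) (hε0 : 0 ≤ εh₀) (hΔminpos : 0 < Δmin)
    (hεlt : εh₀ < Δmin^2) (hσA : Δmin ≤ σA) (hσApos : 0 < σA)
    (hκdef : κ = 1 - εh₀ / σA^2) (hκpos : 0 < κ)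
    (hΔmaxmin : Δmin ≤ Δmax) (ht0 : 0 ≤ t) (ht2 : κ ≤ t^2) :
    Real.sqrt (1 - t^2) / t ≤ (Δmax / Δmin) * ((e / Δmin) / (1 - (e / Δmin)^2)) := by
  have hσA2 : Δmin^2 ≤ σA^2 := by nlinarith
  have hstep1 : Real.sqrt (1 - t^2) / t ≤ Real.sqrt (1-κ) / Real.sqrt κ := by
    apply div_le_div₀ (Real.sqrt_nonneg _) (Real.sqrt_le_sqrt (by linarith))
      (Real.sqrt_pos.2 hκpos)
    have h1 : Real.sqrt κ ≤ Real.sqrt (t^2) := Real.sqrt_le_sqrt ht2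
    rwa [Real.sqrt_sq ht0] at h1
  have hq1 : Real.sqrt (1-κ) = e / σA := by
    have h1 : 1 - κ = εh₀ / σA^2 := by rw [hκdef]; ring
    rw [h1, Real.sqrt_div hε0, Real.sqrt_sq hσApos.le, ← he2, Real.sqrt_sq he0]
  have hq2 : Real.sqrt κ = Real.sqrt (σA^2 - εh₀) / σA := by
    have h1 : κ = (σA^2 - εh₀) / σA^2 := by rw [hκdef]; field_simp
    rw [h1, Real.sqrt_div (by nlinarith), Real.sqrt_sq hσApos.le]
  have hsq_pos : 0 < Real.sqrt (σA^2 - εh₀) := Real.sqrt_pos.2 (by nlinarith)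
  have hsqd_pos : 0 < Real.sqrt (Δmin^2 - εh₀) := Real.sqrt_pos.2 (by nlinarith)
  have hstep2 : Real.sqrt (1-κ) / Real.sqrt κ = e / Real.sqrt (σA^2 - εh₀) := by
    rw [hq1, hq2]
    field_simp
  have hstep3 : e / Real.sqrt (σA^2 - εh₀) ≤ e / Real.sqrt (Δmin^2 - εh₀) := by
    have hmono : Real.sqrt (Δmin^2 - εh₀) ≤ Real.sqrt (σA^2 - εh₀) :=
      Real.sqrt_le_sqrt (by nlinarith)
    rw [div_le_div_iff₀ hsq_pos hsqd_pos]
    nlinarith [he0, hmono, hsqd_pos.le, hsq_pos.le]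
  have hstep4 : e / Real.sqrt (Δmin^2 - εh₀) ≤ Δmax * e / (Δmin^2 - εh₀) := by
    have ha2 : Real.sqrt (Δmin^2 - εh₀) ^ 2 = Δmin^2 - εh₀ := Real.sq_sqrt (by nlinarith)
    have haΔ : Real.sqrt (Δmin^2 - εh₀) ≤ Δmax := by
      have h1 : Real.sqrt (Δmin^2 - εh₀) ≤ Real.sqrt (Δmin^2) := Real.sqrt_le_sqrt (by linarith)
      rw [Real.sqrt_sq hΔminpos.le] at h1
      linarith
    rw [div_le_div_iff₀ hsqd_pos (by nlinarith)]
    have hmul := mul_le_mul_of_nonneg_left haΔ (mul_nonneg he0 hsqd_pos.le)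
    calc e * (Δmin^2 - εh₀) = (e * Real.sqrt (Δmin^2 - εh₀)) * Real.sqrt (Δmin^2 - εh₀) := by
          conv_lhs => rw [← ha2]
          ring
      _ ≤ (e * Real.sqrt (Δmin^2 - εh₀)) * Δmax := hmul
      _ = Δmax * e * Real.sqrt (Δmin^2 - εh₀) := by ring
  have hrhs : (Δmax / Δmin) * ((e / Δmin) / (1 - (e / Δmin)^2))
      = Δmax * e / (Δmin^2 - εh₀) := by
    have hd2 : Δmin^2 ≠ 0 := ne_of_gt (pow_pos hΔminpos 2)
    have hden : 1 - (e/Δmin)^2 = (Δmin^2 - εh₀)/Δmin^2 := by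
      rw [div_pow, he2, sub_div, div_self hd2]
    rw [hden]
    have hne : Δmin^2 - εh₀ ≠ 0 := by nlinarith
    field_simp
  rw [hrhs]
  calc Real.sqrt (1 - t^2) / t ≤ Real.sqrt (1-κ) / Real.sqrt κ := hstep1
    _ = e / Real.sqrt (σA^2 - εh₀) := hstep2
    _ ≤ e / Real.sqrt (Δmin^2 - εh₀) := hstep3
    _ ≤ Δmax * e / (Δmin^2 - εh₀) := hstep4

set_option maxHeartbeats 2000000 in
/-- Theorem 2 of the paper (main theorem): distance between the `h`-dimensional
LSI subspace (spanned by the columns of `U`, the first `h` left singular vectors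
of `A`) and the optimum subspace (spanned by the columns of `Xt`). -/
theorem lsi_close_to_optimum {m n h : ℕ} (hh : 0 < h)
    (A : Matrix (Fin m) (Fin n) ℝ)
    (σ : ℕ → ℝ) (hσ : IsSingularValues A σ)
    (U : Matrix (Fin m) (Fin h) ℝ) (hU : Uᵀ * U = 1)
    (hUsv : A * Aᵀ * U = U * Matrix.diagonal (fun j : Fin h => σ (j : ℕ) ^ 2))
    (Xt : Matrix (Fin m) (Fin h) ℝ) (hXt : Xtᵀ * Xt = 1)
    (Dh Db : Matrix (Fin m) (Fin n) ℝ)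
    (hDh : Dh = Xt * Xtᵀ * A) (hDb : Db = A - Dh)
    (σh : ℕ → ℝ) (hσh : IsSingularValues Dh σh)
    (Δmax Δmin : ℝ) (hΔmax : Δmax = σh 0) (hΔmin : Δmin = σh (h - 1))
    (εh₀ : ℝ) (hεh₀ : εh₀ = specNorm (Dbᵀ * Db))
    (hgap : Real.sqrt εh₀ < Δmin) :
    ∀ τ : ℕ → ℝ, IsSingularValues (Uᵀ * Xt) τ →
      Real.sqrt (1 - τ (h - 1) ^ 2) / τ (h - 1) ≤
        (Δmax / Δmin) *
          ((Real.sqrt εh₀ / Δmin) / (1 - (Real.sqrt εh₀ / Δmin) ^ 2)) := by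
  classical
  intro τ hτ
  set e := Real.sqrt εh₀ with hedef
  have he0 : 0 ≤ e := Real.sqrt_nonneg _
  have hΔminpos : 0 < Δmin := lt_of_le_of_lt he0 hgap
  have hε0 : 0 ≤ εh₀ := hεh₀ ▸ specNorm_nonneg _
  have he2 : e ^ 2 = εh₀ := Real.sq_sqrt hε0
  have hεlt : εh₀ < Δmin ^ 2 := by nlinarith
  have hn : h ≤ n := by
    by_contra hc
    push_neg at hc
    have h0 : σh (h - 1) = 0 := hσh.2.2.1 _ (by omega)
    rw [← hΔmin] at h0
    linarith
  have hAH : (Aᵀ * A).IsHermitian := by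
    have := Matrix.isHermitian_conjTranspose_mul_self A
    rwa [Matrix.conjTranspose_eq_transpose_of_trivial] at this
  have hDH : (Dhᵀ * Dh).IsHermitian := by
    have := Matrix.isHermitian_conjTranspose_mul_self Dh
    rwa [Matrix.conjTranspose_eq_transpose_of_trivial] at this
  have hΔmin0 : (0:ℝ) ≤ Δmin := hΔminpos.le
  -- Step 1: many σh-squares exceed Δmin²
  have hcount_σh : h ≤ (Finset.univ.filter (fun i : Fin n => Δmin^2 ≤ σh (i:ℕ)^2)).card := by
    have hsub : ∀ a ∈ (Finset.univ : Finset (Fin h)), Fin.castLE hn a ∈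
        (Finset.univ.filter (fun i : Fin n => Δmin^2 ≤ σh (i:ℕ)^2)) := by
      intro a _
      refine Finset.mem_filter.2 ⟨Finset.mem_univ _, ?_⟩
      have h2 : Δmin ≤ σh ((Fin.castLE hn a : Fin n) : ℕ) := by
        rw [hΔmin]
        exact hσh.1 (by simp [Fin.castLE]; omega)
      nlinarith [hσh.2.1 ((Fin.castLE hn a : Fin n) : ℕ)]
    have hinj : Set.InjOn (Fin.castLE hn) ↑(Finset.univ : Finset (Fin h)) := fun a _ b _ hab =>
      Fin.castLE_injective hn hab
    have := Finset.card_le_card_of_injOn _ hsub hinj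
    simpa using this
  -- Step 2: transfer to eigenvalues of DhᵀDh
  have hmulσh := hσh.2.2.2 hDH
  have hcount_μ : h ≤ (Finset.univ.filter (fun j : Fin n => Δmin^2 ≤ hDH.eigenvalues j)).card := by
    have h1 : Multiset.countP (fun x => Δmin^2 ≤ x)
        (Multiset.map (fun i : Fin n => σh (i:ℕ)^2) Finset.univ.val)
        = Multiset.countP (fun x => Δmin^2 ≤ x)
          (Multiset.map hDH.eigenvalues Finset.univ.val) := by rw [hmulσh]
    rw [Multiset.countP_map, Multiset.countP_map] at h1
    have h2 : (Finset.univ.filter (fun i : Fin n => Δmin^2 ≤ σh (i:ℕ)^2)).card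
        = (Finset.univ.filter (fun j : Fin n => Δmin^2 ≤ hDH.eigenvalues j)).card := by
      rw [Finset.card_def, Finset.card_def, Finset.filter_val, Finset.filter_val]
      convert h1 using 2
    omega
  -- Step 3: comparison of quadratic forms and eigenvalue counting for AᵀA
  have hcmp : ∀ v : Fin n → ℝ, v ⬝ᵥ ((Dhᵀ * Dh) *ᵥ v) ≤ v ⬝ᵥ ((Aᵀ * A) *ᵥ v) := by
    intro v
    rw [← quad_eq, ← quad_eq]
    have hDv : Dh *ᵥ v = Xt *ᵥ (Xtᵀ *ᵥ (A *ᵥ v)) := by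
      rw [Matrix.mulVec_mulVec, Matrix.mulVec_mulVec, hDh]
    rw [hDv, mulVec_ortho Xt hXt]
    exact contraction Xt hXt (A *ᵥ v)
  have hcount_ν : h ≤ (Finset.univ.filter (fun j : Fin n => Δmin^2 ≤ hAH.eigenvalues j)).card :=
    le_trans hcount_μ (eig_count_le (Aᵀ*A) (Dhᵀ*Dh) hAH hDH (Δmin^2) hcmp)
  -- Step 4: back to σ
  have hmulσ := hσ.2.2.2 hAH
  have hcount_σ : h ≤ (Finset.univ.filter (fun i : Fin n => Δmin^2 ≤ σ (i:ℕ)^2)).card := by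
    have h1 : Multiset.countP (fun x => Δmin^2 ≤ x)
        (Multiset.map (fun i : Fin n => σ (i:ℕ)^2) Finset.univ.val)
        = Multiset.countP (fun x => Δmin^2 ≤ x)
          (Multiset.map hAH.eigenvalues Finset.univ.val) := by rw [hmulσ]
    rw [Multiset.countP_map, Multiset.countP_map] at h1
    have h2 : (Finset.univ.filter (fun i : Fin n => Δmin^2 ≤ σ (i:ℕ)^2)).card
        = (Finset.univ.filter (fun j : Fin n => Δmin^2 ≤ hAH.eigenvalues j)).card := by
      rw [Finset.card_def, Finset.card_def, Finset.filter_val, Finset.filter_val]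
      convert h1 using 2
    omega
  have hσA : Δmin ≤ σ (h-1) := by
    by_contra hcon
    push_neg at hcon
    have hsub : ∀ i ∈ Finset.univ.filter (fun i : Fin n => Δmin^2 ≤ σ (i:ℕ)^2),
        (i:ℕ) ∈ Finset.range (h-1) := by
      intro i hi
      rw [Finset.mem_filter] at hi
      rw [Finset.mem_range]
      by_contra hge
      push_neg at hge
      have h1 : σ (i:ℕ) ≤ σ (h-1) := hσ.1 (by omega)
      have h2 : 0 ≤ σ (i:ℕ) := hσ.2.1 _
      nlinarith [hi.2]
    have hinj : Set.InjOn (fun i : Fin n => (i:ℕ))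
        ↑(Finset.univ.filter (fun i : Fin n => Δmin^2 ≤ σ (i:ℕ)^2)) :=
      fun a _ b _ hab => Fin.ext hab
    have := Finset.card_le_card_of_injOn _ hsub hinj
    rw [Finset.card_range] at this
    omega
  set σA := σ (h-1) with hσAdef
  have hσApos : 0 < σA := lt_of_lt_of_le hΔminpos hσA
  -- Step 5: the tangent bound on the U side
  set M := Uᵀ * Xt with hMdef
  set κ := 1 - εh₀ / σA^2 with hκdef
  have hσA2 : Δmin^2 ≤ σA^2 := pow_le_pow_left₀ hΔmin0 hσA 2
  have hκpos : 0 < κ := by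
    rw [hκdef]
    have h1 : εh₀ / σA^2 < 1 := by
      rw [div_lt_one (by positivity)]
      nlinarith
    linarith
  clear_value σA κ
  have hL5 : ∀ v : Fin h → ℝ, κ * (v ⬝ᵥ v) ≤ (Mᵀ *ᵥ v) ⬝ᵥ (Mᵀ *ᵥ v) := by
    intro v
    have hσj : ∀ j : Fin h, σA ≤ σ (j:ℕ) := by
      intro j
      rw [hσAdef]
      exact hσ.1 (by omega)
    have hσjpos : ∀ j : Fin h, 0 < σ (j:ℕ) := fun j => lt_of_lt_of_le hσApos (hσj j)
    set wv : Fin h → ℝ := fun j => v j / σ (j:ℕ)^2 with hwvdef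
    set y : Fin n → ℝ := Aᵀ *ᵥ (U *ᵥ wv) with hydef
    have hkey1 : A *ᵥ y = U *ᵥ v := by
      have hdg : (Matrix.diagonal fun j : Fin h => σ (j:ℕ)^2) *ᵥ wv = v := by
        funext j
        rw [Matrix.mulVec_diagonal]
        show σ (j:ℕ)^2 * (v j / σ (j:ℕ)^2) = v j
        rw [mul_comm]
        exact div_mul_cancel₀ (v j) (pow_ne_zero 2 (hσjpos j).ne')
      rw [hydef, Matrix.mulVec_mulVec, Matrix.mulVec_mulVec, hUsv, ← Matrix.mulVec_mulVec, hdg]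
    have hkey2 : U *ᵥ v - (Xt * Xtᵀ) *ᵥ (U *ᵥ v) = Db *ᵥ y := by
      have hQA : (Xt * Xtᵀ) *ᵥ (A *ᵥ y) = Dh *ᵥ y := by
        rw [Matrix.mulVec_mulVec, hDh]
      rw [← hkey1, hQA, hDb, Matrix.sub_mulVec]
    have hkey3 : y ⬝ᵥ y = wv ⬝ᵥ v := by
      have h1 : y ⬝ᵥ y = (U *ᵥ wv) ⬝ᵥ (A *ᵥ y) := by
        conv_lhs => rw [hydef]
        rw [dot_transpose_left]
      rw [h1, hkey1, mulVec_ortho U hU]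
    have hkey4 : Mᵀ *ᵥ v = Xtᵀ *ᵥ (U *ᵥ v) := by
      rw [hMdef, Matrix.transpose_mul, Matrix.transpose_transpose, ← Matrix.mulVec_mulVec]
    have hdefect := proj_defect Xt hXt (U *ᵥ v)
    have hQ : Xt *ᵥ (Xtᵀ *ᵥ (U *ᵥ v)) = (Xt * Xtᵀ) *ᵥ (U *ᵥ v) := Matrix.mulVec_mulVec _ _ _
    rw [hQ] at hdefect
    rw [hkey2] at hdefect
    -- hdefect : (Db *ᵥ y) ⬝ᵥ (Db *ᵥ y) = (U*ᵥv)⬝ᵥ(U*ᵥv) − (Xtᵀ*ᵥ(U*ᵥv))⬝ᵥ(...)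
    have hDbB : (Db *ᵥ y) ⬝ᵥ (Db *ᵥ y) ≤ εh₀ * (y ⬝ᵥ y) := by
      rw [hεh₀]
      exact specNorm_quad Db y
    have hyv : y ⬝ᵥ y ≤ (v ⬝ᵥ v) / σA^2 := by
      rw [hkey3, hwvdef]
      unfold dotProduct
      rw [Finset.sum_div]
      apply Finset.sum_le_sum
      intro j _
      have h1 : 0 < σ (j:ℕ)^2 := pow_pos (hσjpos j) 2
      have h2 : σA^2 ≤ σ (j:ℕ)^2 := by nlinarith [hσj j, hσApos]
      rw [div_mul_eq_mul_div, div_le_div_iff₀ h1 (pow_pos hσApos 2)]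
      nlinarith [sq_nonneg (v j)]
    have huu : (U *ᵥ v) ⬝ᵥ (U *ᵥ v) = v ⬝ᵥ v := mulVec_ortho U hU v v
    rw [hkey4]
    have h3 : (Db *ᵥ y) ⬝ᵥ (Db *ᵥ y) ≤ εh₀ * ((v ⬝ᵥ v) / σA^2) :=
      le_trans hDbB (by nlinarith [hyv, hε0])
    have h4 : κ * (v ⬝ᵥ v) = v ⬝ᵥ v - εh₀ * ((v ⬝ᵥ v) / σA^2) := by
      rw [hκdef]; field_simp
    linarith [hdefect, huu, h3, h4]
  -- Step 6: eigenvalues of MᵀM are at least κ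
  have hMH : (Mᵀ * M).IsHermitian := by
    have := Matrix.isHermitian_conjTranspose_mul_self M
    rwa [Matrix.conjTranspose_eq_transpose_of_trivial] at this
  have heigbound : ∀ i, κ ≤ hMH.eigenvalues i := eig_flip M κ hκpos hL5 hMH
  have hmulτ := hτ.2.2.2 hMH
  have hmem : τ (h-1)^2 ∈ Multiset.map hMH.eigenvalues Finset.univ.val := by
    rw [← hmulτ]
    refine Multiset.mem_map.2 ⟨(⟨h-1, by omega⟩ : Fin h), by simp, rfl⟩
  obtain ⟨j, _, hj⟩ := Multiset.mem_map.1 hmem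
  have ht2 : κ ≤ τ (h-1)^2 := hj ▸ heigbound j
  have ht0 : 0 ≤ τ (h-1) := hτ.2.1 _
  set t := τ (h-1) with htdef
  have htpos : 0 < t := by nlinarith
  have hΔmaxmin : Δmin ≤ Δmax := by
    rw [hΔmax, hΔmin]
    exact hσh.1 (by omega)
  exact final_arith Δmax Δmin εh₀ σA t e κ he0 he2 hε0 hΔminpos hεlt hσA hσApos hκdef
    hκpos hΔmaxmin ht0 ht2
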